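/- A linear map ψ on the real space of Hermitian operators of a finite-dimensional Hilbert space which is both positive (maps positive semidefinite operators to positive semidefinite operators) and orthogonal with respect to the Hilbert–Schmidt inner product ⟨A,B⟩ = Tr(AB) induces a bijection on the set of pure states (rank-one orthogonal projections). -/

import Mathlib

open scoped ComplexOrder
open Matrix Complex Finset


variable {n : ℕ}

/-- trace of a Hermitian matrix is the sum of its eigenvalues. -/
lemma trace_eq_sum_eig {A : Matrix (Fin n) (Fin n) ℂ} (hA : A.IsHermitian) :
    A.trace = ((∑ i, hA.eigenvalues i : ℝ) : ℂ) := by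
  conv_lhs => rw [hA.spectral_theorem, Unitary.conjStarAlgAut_apply]
  rw [trace_mul_cycle, Unitary.coe_star_mul_self, one_mul, trace_diagonal]
  push_cast
  rfl

lemma sq_spectral {A : Matrix (Fin n) (Fin n) ℂ} (hA : A.IsHermitian) :
    A * A = (hA.eigenvectorUnitary : Matrix (Fin n) (Fin n) ℂ) *
      (diagonal (RCLike.ofReal ∘ hA.eigenvalues) * diagonal (RCLike.ofReal ∘ hA.eigenvalues)) *
      (star (hA.eigenvectorUnitary : Matrix (Fin n) (Fin n) ℂ)) := by
  conv_lhs => rw [hA.spectral_theorem, Unitary.conjStarAlgAut_apply]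
  set U := (hA.eigenvectorUnitary : Matrix (Fin n) (Fin n) ℂ)
  set D := diagonal (RCLike.ofReal ∘ hA.eigenvalues : Fin n → ℂ)
  have h1 : star U * U = 1 := Unitary.coe_star_mul_self _
  calc U * D * star U * (U * D * star U)
      = U * D * ((star U * U) * (D * star U)) := by simp only [mul_assoc]
    _ = U * (D * D) * star U := by rw [h1, one_mul]; simp only [mul_assoc]

lemma trace_sq_eq_sum_eig {A : Matrix (Fin n) (Fin n) ℂ} (hA : A.IsHermitian) :
    (A * A).trace = ((∑ i, hA.eigenvalues i ^ 2 : ℝ) : ℂ) := by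
  rw [sq_spectral hA, trace_mul_cycle, ← mul_assoc, Unitary.coe_star_mul_self, one_mul,
    diagonal_mul_diagonal, trace_diagonal]
  push_cast
  congr 1
  ext i
  simp [sq]

lemma trace_mul_self_herm {H : Matrix (Fin n) (Fin n) ℂ} (hH : H.IsHermitian) :
    (H * H).trace = ((∑ i, ∑ j, Complex.normSq (H i j) : ℝ) : ℂ) := by
  nth_rewrite 1 [← hH.eq]
  simp only [Matrix.trace, Matrix.diag_apply, Matrix.mul_apply, Matrix.conjTranspose_apply,
    Complex.star_def, ← Complex.normSq_eq_conj_mul_self]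
  push_cast
  rw [Finset.sum_comm]

lemma herm_eq_zero_of_trace_sq {H : Matrix (Fin n) (Fin n) ℂ} (hH : H.IsHermitian)
    (h : (H * H).trace = 0) : H = 0 := by
  rw [trace_mul_self_herm hH] at h
  rw [Complex.ofReal_eq_zero] at h
  have hz : ∀ i ∈ Finset.univ, ∀ j ∈ Finset.univ, Complex.normSq (H i j) = 0 := by
    intro i _
    have h1 := (Finset.sum_eq_zero_iff_of_nonneg (fun i _ =>
      Finset.sum_nonneg fun j _ => Complex.normSq_nonneg _)).mp h i (Finset.mem_univ i)
    exact fun j _ => (Finset.sum_eq_zero_iff_of_nonneg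
      (fun j _ => Complex.normSq_nonneg _)).mp h1 j (Finset.mem_univ j)
  ext i j
  simpa using Complex.normSq_eq_zero.mp (hz i (Finset.mem_univ i) j (Finset.mem_univ j))

lemma psd_trace_nonneg {A : Matrix (Fin n) (Fin n) ℂ} (hA : A.PosSemidef) :
    0 ≤ A.trace := by
  rw [trace_eq_sum_eig hA.1]
  rw [Complex.zero_le_real]
  exact Finset.sum_nonneg fun i _ => hA.eigenvalues_nonneg i

lemma psd_mul_trace_nonneg {A B : Matrix (Fin n) (Fin n) ℂ} (hA : A.PosSemidef)
    (hB : B.PosSemidef) : 0 ≤ (A * B).trace := by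
  obtain ⟨X, hX, -, hXA⟩ := open MatrixOrder in
    CFC.exists_sqrt_of_isSelfAdjoint_of_quasispectrumRestricts hA.isHermitian
      (QuasispectrumRestricts.nnreal_of_nonneg hA.nonneg)
  have h1 : A = X * X := hXA.symm
  have h2 : (A * B).trace = (X * B * Xᴴ).trace := by
    rw [show Xᴴ = X from hX]
    conv_lhs => rw [h1]
    rw [mul_assoc, trace_mul_comm, mul_assoc]
  rw [h2]
  exact psd_trace_nonneg (hB.mul_mul_conjTranspose_same X)

lemma trace_mul_vecMulVec {A : Matrix (Fin n) (Fin n) ℂ} (x : Fin n → ℂ) :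
    (A * vecMulVec x (star x)).trace = star x ⬝ᵥ A *ᵥ x := by
  simp only [Matrix.trace, Matrix.diag_apply, Matrix.mul_apply, vecMulVec_apply,
    dotProduct, Matrix.mulVec, Pi.star_apply]
  refine Finset.sum_congr rfl fun i _ => ?_
  rw [Finset.mul_sum]
  exact Finset.sum_congr rfl fun j _ => by ring

lemma vecMulVec_psd (x : Fin n → ℂ) : (vecMulVec x (star x)).PosSemidef := by
  refine .of_dotProduct_mulVec_nonneg ?_ ?_
  · ext i j
    simp [vecMulVec_apply, conjTranspose_apply, mul_comm]
  · intro y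
    have h : (vecMulVec x (star x)) *ᵥ y = (star x ⬝ᵥ y) • x := by
      ext i
      simp only [Matrix.mulVec, vecMulVec_apply, dotProduct, Pi.smul_apply, Pi.star_apply,
        smul_eq_mul, Finset.sum_mul]
      exact Finset.sum_congr rfl fun j _ => by ring
    rw [h, dotProduct_smul, smul_eq_mul, Matrix.star_dotProduct, Complex.star_def,
      ← Complex.normSq_eq_conj_mul_self, Complex.zero_le_real]
    exact Complex.normSq_nonneg _

lemma pure_of_psd_trace {A : Matrix (Fin n) (Fin n) ℂ} (hA : A.PosSemidef)
    (h1 : A.trace = 1) (h2 : (A * A).trace = 1) : A * A = A := by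
  have hs : ∑ i, hA.1.eigenvalues i = 1 := by
    rw [trace_eq_sum_eig hA.1, Complex.ofReal_eq_one] at h1; exact h1
  have hs2 : ∑ i, hA.1.eigenvalues i ^ 2 = 1 := by
    rw [trace_sq_eq_sum_eig hA.1, Complex.ofReal_eq_one] at h2; exact h2
  have hnn := hA.eigenvalues_nonneg
  have hle : ∀ i, hA.1.eigenvalues i ≤ 1 := fun i =>
    hs ▸ Finset.single_le_sum (fun j _ => hnn j) (Finset.mem_univ i)
  have hsum : ∑ i, hA.1.eigenvalues i * (1 - hA.1.eigenvalues i) = 0 := by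
    have : ∀ i ∈ Finset.univ, hA.1.eigenvalues i * (1 - hA.1.eigenvalues i)
        = hA.1.eigenvalues i - hA.1.eigenvalues i ^ 2 := fun i _ => by ring
    rw [Finset.sum_congr rfl this, Finset.sum_sub_distrib, hs, hs2, sub_self]
  have hidem : ∀ i, hA.1.eigenvalues i * hA.1.eigenvalues i = hA.1.eigenvalues i := by
    intro i
    have h0 := (Finset.sum_eq_zero_iff_of_nonneg (fun i _ =>
      mul_nonneg (hnn i) (sub_nonneg.mpr (hle i)))).mp hsum i (Finset.mem_univ i)
    have := mul_eq_zero.mp h0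
    rcases this with h | h
    · rw [h, mul_zero]
    · have : hA.1.eigenvalues i = 1 := by linarith [sub_eq_zero.mp h]
      rw [this, mul_one]
  have hDD : diagonal (RCLike.ofReal ∘ hA.1.eigenvalues : Fin n → ℂ)
      * diagonal (RCLike.ofReal ∘ hA.1.eigenvalues)
      = diagonal (RCLike.ofReal ∘ hA.1.eigenvalues) := by
    rw [diagonal_mul_diagonal]
    refine congrArg diagonal (funext fun i => ?_)
    simp only [Pi.mul_apply, Function.comp_apply]
    rw [← RCLike.ofReal_mul, hidem i]
  rw [sq_spectral hA.1, hDD]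
  conv_rhs => rw [hA.1.spectral_theorem, Unitary.conjStarAlgAut_apply]

lemma trace_ge_one {A : Matrix (Fin n) (Fin n) ℂ} (hA : A.PosSemidef)
    (h2 : (A * A).trace = 1) : (1 : ℂ) ≤ A.trace := by
  have hs2 : ∑ i, hA.1.eigenvalues i ^ 2 = 1 := by
    rw [trace_sq_eq_sum_eig hA.1, Complex.ofReal_eq_one] at h2; exact h2
  have hnn := hA.eigenvalues_nonneg
  set s := ∑ i, hA.1.eigenvalues i with hsdef
  have hs0 : 0 ≤ s := Finset.sum_nonneg fun i _ => hnn i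
  have hsq : (1 : ℝ) ≤ s * s := by
    rw [← hs2]
    calc ∑ i, hA.1.eigenvalues i ^ 2
        ≤ ∑ i, hA.1.eigenvalues i * s := Finset.sum_le_sum fun i _ => by
          rw [sq]
          exact mul_le_mul_of_nonneg_left
            (Finset.single_le_sum (fun j _ => hnn j) (Finset.mem_univ i)) (hnn i)
      _ = s * s := by rw [← Finset.sum_mul]
  have h1s : (1 : ℝ) ≤ s := by nlinarith
  rw [trace_eq_sum_eig hA.1, show (1 : ℂ) = ((1 : ℝ) : ℂ) by norm_num, Complex.real_le_real]
  exact h1s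

/-- A pure state: a rank-one orthogonal projection, i.e. a Hermitian idempotent
of trace 1. -/
def IsPureState {n : ℕ} (ρ : Matrix (Fin n) (Fin n) ℂ) : Prop :=
  ρ.IsHermitian ∧ ρ * ρ = ρ ∧ ρ.trace = 1

lemma pure_psd {n : ℕ} {ρ : Matrix (Fin n) (Fin n) ℂ} (h : IsPureState ρ) :
    ρ.PosSemidef ∧ (ρ * ρ).trace = 1 := by
  obtain ⟨h1, h2, h3⟩ := h
  refine ⟨?_, by rw [h2, h3]⟩
  have h4 : ρᴴ * ρ = ρ := by rw [h1.eq, h2]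
  rw [← h4]
  exact posSemidef_conjTranspose_mul_self ρ

lemma pure_diag_single {n : ℕ} (i : Fin n) :
    IsPureState (diagonal (Pi.single i 1) : Matrix (Fin n) (Fin n) ℂ) := by
  refine ⟨?_, ?_, ?_⟩
  · rw [Matrix.IsHermitian, diagonal_conjTranspose]
    refine congrArg diagonal (funext fun j => ?_)
    by_cases h : j = i <;> simp [Pi.single_apply, h]
  · rw [diagonal_mul_diagonal]
    refine congrArg diagonal (funext fun j => ?_)
    by_cases h : j = i <;> simp [Pi.single_apply, h]
  · rw [trace_diagonal]
    simp [Pi.single_apply]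

/-- A real-linear map ψ on Hermitian operators of a
finite-dimensional Hilbert space which is positive and orthogonal for the
Hilbert–Schmidt inner product ⟨A,B⟩ = Tr(AB) induces a bijection on the set of
pure states. -/
theorem stmt_8 (n : ℕ) (hn : 0 < n)
    (ψ : Matrix (Fin n) (Fin n) ℂ →ₗ[ℝ] Matrix (Fin n) (Fin n) ℂ)
    (hherm : ∀ A : Matrix (Fin n) (Fin n) ℂ, A.IsHermitian → (ψ A).IsHermitian)
    (hpos : ∀ A : Matrix (Fin n) (Fin n) ℂ, A.PosSemidef → (ψ A).PosSemidef)
    (horth : ∀ A B : Matrix (Fin n) (Fin n) ℂ, A.IsHermitian → B.IsHermitian →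
      (ψ A * ψ B).trace = (A * B).trace) :
    Set.BijOn ψ {ρ | IsPureState ρ} {ρ | IsPureState ρ} := by
  classical
  -- injectivity on Hermitian matrices
  have hinj : ∀ A B : Matrix (Fin n) (Fin n) ℂ, A.IsHermitian → B.IsHermitian →
      ψ A = ψ B → A = B := by
    intro A B hA hB h
    have hH : (A - B).IsHermitian := hA.sub hB
    have h0 : ψ (A - B) = 0 := by rw [map_sub, h, sub_self]
    have ht := horth (A - B) (A - B) hH hH
    rw [h0, zero_mul, trace_zero] at ht
    exact sub_eq_zero.mp (herm_eq_zero_of_trace_sq hH ht.symm)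
  -- the diagonal pure states summing to 1
  have hEsum : ∑ i, (diagonal (Pi.single i 1) : Matrix (Fin n) (Fin n) ℂ) = 1 := by
    ext i j
    simp only [Matrix.sum_apply, Matrix.diagonal_apply, Matrix.one_apply, Pi.single_apply]
    by_cases h : i = j
    · subst h; simp
    · simp [h]
  -- ψ 1 = 1
  have hψ1 : ψ 1 = 1 := by
    have hB : (ψ 1).IsHermitian := hherm 1 isHermitian_one
    have htr2 : (ψ 1 * ψ 1).trace = (n : ℂ) := by
      rw [horth 1 1 isHermitian_one isHermitian_one, one_mul, trace_one]
      simp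
    have htr : (n : ℂ) ≤ (ψ 1).trace := by
      have hsum : ψ 1 = ∑ i, ψ (diagonal (Pi.single i 1)) := by
        rw [← map_sum, hEsum]
      rw [hsum, trace_sum]
      calc (n : ℂ) = ∑ _i : Fin n, 1 := by simp
        _ ≤ ∑ i, (ψ (diagonal (Pi.single i 1))).trace := by
          refine Finset.sum_le_sum fun i _ => ?_
          have hp := pure_diag_single (n := n) i
          have hpsd := (pure_psd hp).1
          refine trace_ge_one (hpos _ hpsd) ?_
          rw [horth _ _ hp.1 hp.1, (pure_psd hp).2]
    have hherm' : (ψ 1 - 1).IsHermitian := hB.sub isHermitian_one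
    have hexp : ((ψ 1 - 1) * (ψ 1 - 1)).trace
        = (2 * n : ℂ) - 2 * (ψ 1).trace := by
      simp only [sub_mul, mul_sub, mul_one, one_mul, trace_sub, htr2, trace_one,
        Fintype.card_fin]
      push_cast
      ring
    have hnn : 0 ≤ ((ψ 1 - 1) * (ψ 1 - 1)).trace := by
      rw [trace_mul_self_herm hherm', Complex.zero_le_real]
      exact Finset.sum_nonneg fun i _ => Finset.sum_nonneg fun j _ => Complex.normSq_nonneg _
    have hle : ((ψ 1 - 1) * (ψ 1 - 1)).trace ≤ 0 := by
      rw [hexp]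
      have : (2 * n : ℂ) ≤ 2 * (ψ 1).trace := by
        calc (2 * n : ℂ) = 2 * (n : ℂ) := by ring
          _ ≤ 2 * (ψ 1).trace := by
            refine mul_le_mul_of_nonneg_left htr ?_
            rw [show (2 : ℂ) = ((2 : ℝ) : ℂ) by norm_num, Complex.zero_le_real]
            norm_num
      exact sub_nonpos.mpr this
    have h0 : ((ψ 1 - 1) * (ψ 1 - 1)).trace = 0 := le_antisymm hle hnn
    have := herm_eq_zero_of_trace_sq hherm' h0
    exact sub_eq_zero.mp this
  -- trace preservation
  have htrpres : ∀ A : Matrix (Fin n) (Fin n) ℂ, A.IsHermitian →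
      (ψ A).trace = A.trace := by
    intro A hA
    have := horth A 1 hA isHermitian_one
    rwa [hψ1, mul_one, mul_one] at this
  -- ψ maps pure states to pure states
  have hmaps : ∀ ρ : Matrix (Fin n) (Fin n) ℂ, IsPureState ρ → IsPureState (ψ ρ) := by
    intro ρ hρ
    obtain ⟨hpsd, htrsq⟩ := pure_psd hρ
    have h2 : (ψ ρ * ψ ρ).trace = 1 := by rw [horth ρ ρ hρ.1 hρ.1, htrsq]
    have h1 : (ψ ρ).trace = 1 := by rw [htrpres ρ hρ.1, hρ.2.2]
    exact ⟨hherm ρ hρ.1, pure_of_psd_trace (hpos ρ hpsd) h1 h2, h1⟩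
  -- surjectivity onto pure states
  have hsurj : ∀ q : Matrix (Fin n) (Fin n) ℂ, IsPureState q →
      ∃ ρ, IsPureState ρ ∧ ψ ρ = q := by
    intro q hq
    set S := selfAdjoint.submodule ℝ (Matrix (Fin n) (Fin n) ℂ) with hS
    have hmemS : ∀ A : Matrix (Fin n) (Fin n) ℂ, A ∈ S ↔ A.IsHermitian := by
      intro A
      rw [hS]
      exact selfAdjoint.mem_iff
    have hST : ∀ x ∈ S, ψ x ∈ S := fun x hx => (hmemS _).2 (hherm x ((hmemS _).1 hx))
    let φ : S →ₗ[ℝ] S := ψ.restrict hST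
    have hφinj : Function.Injective φ := by
      intro a b hab
      apply Subtype.ext
      exact hinj a b ((hmemS _).1 a.2) ((hmemS _).1 b.2)
        (congrArg Subtype.val hab)
    obtain ⟨⟨ρ, hρS⟩, hρeq⟩ := LinearMap.injective_iff_surjective.mp hφinj
      ⟨q, (hmemS _).2 hq.1⟩
    have hψρ : ψ ρ = q := congrArg Subtype.val hρeq
    have hρH : ρ.IsHermitian := (hmemS _).1 hρS
    obtain ⟨hqpsd, hqtrsq⟩ := pure_psd hq
    have htrρ : ρ.trace = 1 := by rw [← htrpres ρ hρH, hψρ, hq.2.2]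
    have htrsqρ : (ρ * ρ).trace = 1 := by
      have := horth ρ ρ hρH hρH
      rw [hψρ] at this
      rw [← this, hqtrsq]
    have hρpsd : ρ.PosSemidef := by
      refine .of_dotProduct_mulVec_nonneg hρH fun x => ?_
      rw [← trace_mul_vecMulVec]
      have hP := vecMulVec_psd x
      have horth' := horth ρ _ hρH hP.1
      rw [hψρ] at horth'
      rw [← horth']
      exact psd_mul_trace_nonneg hqpsd (hpos _ hP)
    exact ⟨ρ, ⟨hρH, pure_of_psd_trace hρpsd htrρ htrsqρ, htrρ⟩, hψρ⟩
  refine ⟨fun ρ hρ => hmaps ρ hρ, fun a ha b hb hab => hinj a b ha.1 hb.1 hab,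
    fun q hq => ?_⟩
  obtain ⟨ρ, hρ, hψρ⟩ := hsurj q hq
  exact ⟨ρ, hρ, hψρ⟩
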